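/- arXiv:1009.3065 — 3 statements merged into one kernel-verified Lean document; each statement's English description precedes it below -/
import Mathlib

section
/- Suppose the compatibility condition Σ_{a,b∈X} P a b u · Q a b v = δ_{u,v} holds for all u,v ∈ X. Then the comultiplication Δ is multiplicative with respect to the product: Δ(x * y) = Δ(x) * Δ(y) for all x, y ∈ B, where B ⊗ B carries the componentwise product (x₁ ⊗ x₂)*(y₁ ⊗ y₂) = (x₁*y₁) ⊗ (x₂*y₂). -/
open TensorProduct

private lemma hall_pull_sum {ι : Type*} [Fintype ι] {M : Type*} [AddCommMonoid M]
    (f : ι → ι → ι → M) :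
    ∑ s : ι, ∑ t : ι, ∑ u : ι, f s t u = ∑ u : ι, ∑ s : ι, ∑ t : ι, f s t u := by
  calc ∑ s : ι, ∑ t : ι, ∑ u : ι, f s t u
      = ∑ s : ι, ∑ u : ι, ∑ t : ι, f s t u :=
        Finset.sum_congr rfl fun _ _ => Finset.sum_comm
    _ = ∑ u : ι, ∑ s : ι, ∑ t : ι, f s t u := Finset.sum_comm

set_option maxHeartbeats 1000000 in
/-- Under the compatibility condition
Σ_{a,b} P a b u · Q a b v = δ_{u,v}, the comultiplication Δ is multiplicative
for the product on B and the componentwise product on B ⊗ B.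
(Multiplicativity half of Proposition 1.1.) -/
theorem hall_fusion_comul_multiplicative (k : Type*) [Field k]
    (X : Type*) [Fintype X] [DecidableEq X] (P Q : X → X → X → k)
    (mul : ((X × X) →₀ k) →ₗ[k] ((X × X) →₀ k) →ₗ[k] ((X × X) →₀ k))
    (hmul : ∀ a b c d : X,
      mul (Finsupp.single (a, c) 1) (Finsupp.single (b, d) 1) =
        ∑ u : X, ∑ v : X, (P a b u * Q c d v) • Finsupp.single (u, v) (1 : k))
    (Δ : ((X × X) →₀ k) →ₗ[k] ((X × X) →₀ k) ⊗[k] ((X × X) →₀ k))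
    (hΔ : ∀ a b : X, Δ (Finsupp.single (a, b) 1) =
      ∑ u : X, Finsupp.single (a, u) (1 : k) ⊗ₜ[k] Finsupp.single (u, b) (1 : k))
    (mulT : (((X × X) →₀ k) ⊗[k] ((X × X) →₀ k)) →ₗ[k]
      (((X × X) →₀ k) ⊗[k] ((X × X) →₀ k)) →ₗ[k] (((X × X) →₀ k) ⊗[k] ((X × X) →₀ k)))
    (hmulT : ∀ x₁ x₂ y₁ y₂ : (X × X) →₀ k,
      mulT (x₁ ⊗ₜ[k] x₂) (y₁ ⊗ₜ[k] y₂) = (mul x₁ y₁) ⊗ₜ[k] (mul x₂ y₂))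
    (hcompat : ∀ u v : X,
      ∑ a : X, ∑ b : X, P a b u * Q a b v = if u = v then (1 : k) else 0) :
    ∀ x y : (X × X) →₀ k, Δ (mul x y) = mulT (Δ x) (Δ y) := by
  classical
  -- abbreviation for basis tensors
  set e : X → X → ((X × X) →₀ k) := fun a b => Finsupp.single (a, b) (1 : k) with he
  have key : ∀ a c b d : X,
      Δ (mul (e a c) (e b d)) = mulT (Δ (e a c)) (Δ (e b d)) := by
    intro a c b d
    -- Left hand side
    have hL : Δ (mul (e a c) (e b d)) =
        ∑ u : X, ∑ w : X, ∑ v : X,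
          (P a b u * Q c d v) • (e u w ⊗ₜ[k] e w v) := by
      rw [he]
      rw [hmul a b c d]
      rw [map_sum]
      simp only [map_sum, map_smul, hΔ, Finset.smul_sum]
      refine Finset.sum_congr rfl fun u _ => ?_
      exact Finset.sum_comm
    -- Right hand side
    have hR : mulT (Δ (e a c)) (Δ (e b d)) =
        ∑ s : X, ∑ t : X, ∑ u : X, ∑ w : X, ∑ w' : X, ∑ v : X,
          ((P a b u * Q s t w) * (P s t w' * Q c d v)) • (e u w ⊗ₜ[k] e w' v) := by
      rw [he]
      rw [hΔ, hΔ, map_sum mulT _ Finset.univ, LinearMap.sum_apply]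
      refine Finset.sum_congr rfl fun s _ => ?_
      rw [map_sum]
      refine Finset.sum_congr rfl fun t _ => ?_
      rw [hmulT, hmul a b s t, hmul s t c d]
      rw [TensorProduct.sum_tmul]
      refine Finset.sum_congr rfl fun u _ => ?_
      rw [TensorProduct.sum_tmul]
      refine Finset.sum_congr rfl fun w _ => ?_
      rw [TensorProduct.tmul_sum]
      refine Finset.sum_congr rfl fun w' _ => ?_
      rw [TensorProduct.tmul_sum]
      refine Finset.sum_congr rfl fun v _ => ?_
      rw [TensorProduct.tmul_smul, TensorProduct.smul_tmul', smul_smul,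
        mul_comm (P s t w' * Q c d v) (P a b u * Q s t w), TensorProduct.smul_tmul']
    rw [hL, hR]
    -- pull the sums over s, t to the inside
    rw [hall_pull_sum fun s t u =>
      ∑ w : X, ∑ w' : X, ∑ v : X,
          ((P a b u * Q s t w) * (P s t w' * Q c d v)) • (e u w ⊗ₜ[k] e w' v)]
    refine Finset.sum_congr rfl fun u _ => ?_
    rw [hall_pull_sum fun s t w =>
      ∑ w' : X, ∑ v : X,
          ((P a b u * Q s t w) * (P s t w' * Q c d v)) • (e u w ⊗ₜ[k] e w' v)]
    refine Finset.sum_congr rfl fun w _ => ?_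
    rw [hall_pull_sum fun s t w' =>
      ∑ v : X,
          ((P a b u * Q s t w) * (P s t w' * Q c d v)) • (e u w ⊗ₜ[k] e w' v)]
    refine Eq.trans ?_ (Finset.sum_congr rfl fun w' _ => (hall_pull_sum fun s t v =>
          ((P a b u * Q s t w) * (P s t w' * Q c d v)) • (e u w ⊗ₜ[k] e w' v)).symm)
    -- now compute the inner double sums using compatibility
    have hinner : ∀ w' v : X,
        ∑ s : X, ∑ t : X,
            ((P a b u * Q s t w) * (P s t w' * Q c d v)) • (e u w ⊗ₜ[k] e w' v)
          = (if w' = w then (P a b u * Q c d v) else 0) • (e u w ⊗ₜ[k] e w' v) := by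
      intro w' v
      have : ∑ s : X, ∑ t : X, ((P a b u * Q s t w) * (P s t w' * Q c d v))
          = if w' = w then (P a b u * Q c d v) else 0 := by
        have h1 : ∑ s : X, ∑ t : X, ((P a b u * Q s t w) * (P s t w' * Q c d v))
            = (P a b u * Q c d v) * ∑ s : X, ∑ t : X, (P s t w' * Q s t w) := by
          rw [Finset.mul_sum]
          refine Finset.sum_congr rfl fun s _ => ?_
          rw [Finset.mul_sum]
          refine Finset.sum_congr rfl fun t _ => ?_
          ring
        rw [h1, hcompat w' w]
        by_cases h : w' = w <;> simp [h]
      calc ∑ s : X, ∑ t : X,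
            ((P a b u * Q s t w) * (P s t w' * Q c d v)) • (e u w ⊗ₜ[k] e w' v)
          = (∑ s : X, ∑ t : X, ((P a b u * Q s t w) * (P s t w' * Q c d v)))
              • (e u w ⊗ₜ[k] e w' v) := by
            rw [Finset.sum_smul]
            exact Finset.sum_congr rfl fun s _ => (Finset.sum_smul).symm
        _ = (if w' = w then (P a b u * Q c d v) else 0) • (e u w ⊗ₜ[k] e w' v) := by
            rw [this]
    calc ∑ v : X, (P a b u * Q c d v) • (e u w ⊗ₜ[k] e w v)
        = ∑ w' : X, ∑ v : X,
            (if w' = w then (P a b u * Q c d v) else 0) • (e u w ⊗ₜ[k] e w' v) := by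
          rw [Finset.sum_comm]
          refine Finset.sum_congr rfl fun v _ => ?_
          rw [Finset.sum_eq_single w]
          · simp
          · intro w' _ hne
            simp [hne]
          · intro h
            exact absurd (Finset.mem_univ w) h
      _ = ∑ w' : X, ∑ v : X, ∑ s : X, ∑ t : X,
            ((P a b u * Q s t w) * (P s t w' * Q c d v)) • (e u w ⊗ₜ[k] e w' v) := by
          refine Finset.sum_congr rfl fun w' _ => Finset.sum_congr rfl fun v _ => ?_
          rw [hinner w' v]
  -- extend by bilinearity
  intro x y
  induction x using Finsupp.induction_linear with
  | zero => simp only [map_zero, LinearMap.zero_apply]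
  | add f g hf hg => simp only [map_add, LinearMap.add_apply, hf, hg]
  | single p cp =>
    induction y using Finsupp.induction_linear with
    | zero => simp only [map_zero]
    | add f g hf hg => simp only [map_add, hf, hg]
    | single q cq =>
      have h1 : Finsupp.single p cp = cp • e p.1 p.2 := by
        simp only [he, Finsupp.smul_single, smul_eq_mul, mul_one]
      have h2 : Finsupp.single q cq = cq • e q.1 q.2 := by
        simp only [he, Finsupp.smul_single, smul_eq_mul, mul_one]
      rw [h1, h2]
      simp only [map_smul, LinearMap.smul_apply, map_smul]
      rw [key p.1 p.2 q.1 q.2]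
end

section
/- Suppose Σ_{u∈X} P a b u · Q c d u = δ_{a,c} · δ_{b,d} for all a,b,c,d ∈ X. Then the counit ε is multiplicative with respect to the product: ε(x * y) = ε(x) · ε(y) for all x, y ∈ B. -/
open TensorProduct

/-- If Σ_u P a b u · Q c d u = δ_{a,c} · δ_{b,d}, then the counit
ε(e(a,b)) = δ_{a,b} is multiplicative for the product on B. -/
theorem hall_fusion_counit_multiplicative (k : Type*) [Field k]
    (X : Type*) [Fintype X] [DecidableEq X] (P Q : X → X → X → k)
    (mul : ((X × X) →₀ k) →ₗ[k] ((X × X) →₀ k) →ₗ[k] ((X × X) →₀ k))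
    (hmul : ∀ a b c d : X,
      mul (Finsupp.single (a, c) 1) (Finsupp.single (b, d) 1) =
        ∑ u : X, ∑ v : X, (P a b u * Q c d v) • Finsupp.single (u, v) (1 : k))
    (ε : ((X × X) →₀ k) →ₗ[k] k)
    (hε : ∀ a b : X, ε (Finsupp.single (a, b) 1) = if a = b then (1 : k) else 0)
    (hcompat : ∀ a b c d : X,
      ∑ u : X, P a b u * Q c d u =
        (if a = c then (1 : k) else 0) * (if b = d then (1 : k) else 0)) :
    ∀ x y : (X × X) →₀ k, ε (mul x y) = ε x * ε y := by
  have key : ∀ p q : X × X, ε (mul (Finsupp.single p 1) (Finsupp.single q 1)) =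
      ε (Finsupp.single p 1) * ε (Finsupp.single q 1) := by
    rintro ⟨a, c⟩ ⟨b, d⟩
    rw [hmul, hε, hε, ← hcompat a b c d, map_sum]
    simp only [map_sum, map_smul, hε, smul_eq_mul, Prod.mk.injEq]
    refine Finset.sum_congr rfl fun u _ => ?_
    simp [mul_ite, mul_one, mul_zero, Finset.sum_ite_eq]
  intro x y
  induction x using Finsupp.induction_linear with
  | zero => simp
  | add f g hf hg => simp [map_add, add_mul, hf, hg]
  | single p c =>
    induction y using Finsupp.induction_linear with
    | zero => simp
    | add f g hf hg => simp [map_add, mul_add, hf, hg]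
    | single q e =>
      have h1 : Finsupp.single p c = c • Finsupp.single p (1 : k) := by
        simp [Finsupp.smul_single]
      have h2 : Finsupp.single q e = e • Finsupp.single q (1 : k) := by
        simp [Finsupp.smul_single]
      rw [h1, h2]
      simp only [map_smul, LinearMap.smul_apply, smul_eq_mul, key]
      ring
end

section
/- Suppose: (i) Q is associative, i.e. Σ_{u∈X} Q a b u · Q u c w = Σ_{v∈X} Q b c v · Q a v w for all a,b,c,w ∈ X; (ii) S : X → X satisfies S ∘ S = id and P a b u = Q (S b) (S a) (S u) for all a,b,u ∈ X; (iii) defining Q₃(a,b,c;d) = Σ_{u∈X} Q a b u · Q u c d, one has Σ_{a∈X} Q₃(S a, a, b; c) = δ_{b,c} and Σ_{a∈X} Q₃(a, S a, b; c) = δ_{b,c} for all b,c ∈ X. Then the 'von Neumann' identity μ₃ ∘ (id ⊗ 𝒮 ⊗ id) ∘ Δ₃ = id holds on B; equivalently, for all a,b ∈ X: Σ_{u,v∈X} e(a,u) * e(S v, S u) * e(v,b) = e(a,b). -/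
open TensorProduct


private lemma sum_factor_aux {k : Type*} [CommRing k] {X : Type*} [Fintype X]
    (f g : X → X → k) :
    ∑ u : X, ∑ v : X, ∑ p : X, ∑ q : X, f v p * g u q
      = (∑ v : X, ∑ p : X, f v p) * (∑ u : X, ∑ q : X, g u q) := by
  have h1 : ∀ u : X, (∑ v : X, ∑ p : X, ∑ q : X, f v p * g u q)
      = (∑ v : X, ∑ p : X, f v p) * (∑ q : X, g u q) := by
    intro u
    rw [Finset.sum_mul]
    refine Finset.sum_congr rfl fun v _ => ?_
    rw [Finset.sum_mul]
    refine Finset.sum_congr rfl fun p _ => ?_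
    rw [Finset.mul_sum]
  simp only [h1]
  rw [← Finset.mul_sum]

/-- Under associativity of Q, the antipode compatibility
P a b u = Q (S b) (S a) (S u) for an involution S, and the conditions
Σ_a Q₃(S a, a, b; c) = δ_{b,c} and Σ_a Q₃(a, S a, b; c) = δ_{b,c} where
Q₃(a,b,c;d) = Σ_u Q a b u · Q u c d, the "von Neumann" identity
μ₃ ∘ (id ⊗ 𝒮 ⊗ id) ∘ Δ₃ = id holds on B; equivalently, for all a,b:
Σ_{u,v} e(a,u) * e(S v, S u) * e(v,b) = e(a,b). -/
theorem hall_fusion_von_neumann (k : Type*) [Field k]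
    (X : Type*) [Fintype X] [DecidableEq X] (P Q : X → X → X → k)
    (mul : ((X × X) →₀ k) →ₗ[k] ((X × X) →₀ k) →ₗ[k] ((X × X) →₀ k))
    (hmul : ∀ a b c d : X,
      mul (Finsupp.single (a, c) 1) (Finsupp.single (b, d) 1) =
        ∑ u : X, ∑ v : X, (P a b u * Q c d v) • Finsupp.single (u, v) (1 : k))
    (hQassoc : ∀ a b c w : X,
      ∑ u : X, Q a b u * Q u c w = ∑ v : X, Q b c v * Q a v w)
    (S : X → X) (hS : S ∘ S = id)
    (hPQ : ∀ a b u : X, P a b u = Q (S b) (S a) (S u))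
    (hQ3l : ∀ b c : X,
      ∑ a : X, (∑ u : X, Q (S a) a u * Q u b c) = if b = c then (1 : k) else 0)
    (hQ3r : ∀ b c : X,
      ∑ a : X, (∑ u : X, Q a (S a) u * Q u b c) = if b = c then (1 : k) else 0) :
    ∀ a b : X,
      ∑ u : X, ∑ v : X,
          mul (mul (Finsupp.single (a, u) 1) (Finsupp.single (S v, S u) 1))
            (Finsupp.single (v, b) 1)
        = Finsupp.single (a, b) (1 : k) := by

  intro a b
  have hS' : ∀ x, S (S x) = x := fun x => congrFun hS x
  have hSinj : Function.Injective S := Function.Involutive.injective hS'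
  have step : ∀ u v : X,
      mul (mul (Finsupp.single (a, u) 1) (Finsupp.single (S v, S u) 1))
        (Finsupp.single (v, b) 1)
      = ∑ p : X, ∑ q : X, ∑ w : X, ∑ z : X,
          ((P a (S v) p * Q u (S u) q) * (P p v w * Q q b z)) •
            Finsupp.single (w, z) (1 : k) := by
    intro u v
    rw [hmul]
    simp only [map_sum, LinearMap.sum_apply, map_smul, LinearMap.smul_apply, hmul,
      Finset.smul_sum, smul_smul]
  simp only [step]
  have key2 : ∀ z0 : X, ∑ u : X, ∑ q : X, Q u (S u) q * Q q b z0
      = if b = z0 then (1 : k) else 0 := fun z0 => hQ3r b z0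
  have key1 : ∀ w0 : X, ∑ v : X, ∑ p : X, P a (S v) p * P p v w0
      = if a = w0 then (1 : k) else 0 := by
    intro w0
    have h1 : ∀ v : X, (∑ p : X, P a (S v) p * P p v w0)
        = ∑ p : X, Q v (S a) p * Q (S v) p (S w0) := by
      intro v
      refine Fintype.sum_bijective S (Function.Involutive.bijective hS') _ _ ?_
      intro p
      rw [hPQ a (S v) p, hPQ p v w0, hS']
    simp only [h1, ← hQassoc]
    have := hQ3l (S a) (S w0)
    rw [this]
    simp [hSinj.eq_iff]
  ext ⟨w0, z0⟩
  simp only [Finset.sum_apply', Finsupp.smul_apply, Finsupp.single_apply, smul_eq_mul,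
    mul_ite, mul_one, mul_zero]
  have pair : ∀ f : X → X → k,
      (∑ w : X, ∑ z : X, if (w, z) = (w0, z0) then f w z else 0) = f w0 z0 := by
    intro f
    simp [Prod.ext_iff, ite_and, Finset.sum_ite_irrel, Finset.sum_const_zero,
      Finset.sum_ite_eq']
  simp only [pair]
  have rearr : ∀ u v p q : X, P a (S v) p * Q u (S u) q * (P p v w0 * Q q b z0)
      = (P a (S v) p * P p v w0) * (Q u (S u) q * Q q b z0) := fun _ _ _ _ => by ring
  simp only [rearr]
  rw [sum_factor_aux (fun v p => P a (S v) p * P p v w0)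
      (fun u q => Q u (S u) q * Q q b z0), key1, key2]
  rcases eq_or_ne a w0 with h | h <;> rcases eq_or_ne b z0 with h' | h' <;>
    simp [h, h', Prod.ext_iff]
end
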